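/- Let Ω ⊆ ℝⁿ be nonempty closed convex, F: ℝⁿ → ℝⁿ continuous, and consider the differential equation ẋ(t) = P_Ω[x(t) − F(x(t))] − x(t). If x(0) ∈ Ω, then x(t) ∈ Ω for all t ≥ 0. -/
import Mathlib


open RealInnerProductSpace

open Metric Set in
/-- Forward invariance of Ω under the projected dynamical system ẋ = P_Ω[x − F(x)] − x. -/
theorem stmt_17 {n : ℕ} (Ω : Set (EuclideanSpace ℝ (Fin n)))
    (hne : Ω.Nonempty) (hcl : IsClosed Ω) (hcv : Convex ℝ Ω)
    (P : EuclideanSpace ℝ (Fin n) → EuclideanSpace ℝ (Fin n))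
    (hP : ∀ x, P x ∈ Ω ∧ ∀ z ∈ Ω, ‖x - P x‖ ≤ ‖x - z‖)
    (F : EuclideanSpace ℝ (Fin n) → EuclideanSpace ℝ (Fin n)) (hF : Continuous F)
    (x : ℝ → EuclideanSpace ℝ (Fin n))
    (hode : ∀ t, 0 ≤ t → HasDerivAt x (P (x t - F (x t)) - x t) t)
    (hinit : x 0 ∈ Ω) :
    ∀ t, 0 ≤ t → x t ∈ Ω := by
  intro T hT
  set f : ℝ → ℝ := fun t => infDist (x t) Ω with hfdef
  -- continuity of f on [0, T]
  have hfc : ContinuousOn f (Icc 0 T) := by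
    intro t ht
    exact (((continuous_infDist_pt Ω).continuousAt).comp
      (hode t ht.1).continuousAt).continuousWithinAt
  -- the liminf of right slopes of f is ≤ 0
  have hf' : ∀ t ∈ Ico 0 T, ∀ r : ℝ, (0 : ℝ) < r →
      ∃ᶠ z in nhdsWithin t (Ioi t), (z - t)⁻¹ * (f z - f t) < r := by
    intro t ht r hr
    apply Filter.Eventually.frequently
    set c := P (x t - F (x t)) with hc
    set p := P (x t) with hp
    have hcΩ : c ∈ Ω := (hP _).1
    have hpΩ : p ∈ Ω := (hP _).1
    have hpf : ‖x t - p‖ ≤ f t := by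
      by_contra hlt
      push_neg at hlt
      rcases (infDist_lt_iff hne).1 hlt with ⟨y, hy, hdy⟩
      have := (hP (x t)).2 y hy
      rw [dist_eq_norm] at hdy
      linarith
    -- little-o from the derivative
    have hder := (hode t ht.1).isLittleO
    have hev : ∀ᶠ z in nhdsWithin t (Ioi t),
        ‖x z - x t - (z - t) • (c - x t)‖ ≤ (r / 2) * ‖z - t‖ := by
      have := (hder.def (by linarith : (0:ℝ) < r / 2)).filter_mono
        (nhdsWithin_le_nhds (s := Ioi t))
      simpa [Real.norm_eq_abs] using this
    have hev2 : ∀ᶠ z in nhdsWithin t (Ioi t), z - t ≤ 1 := by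
      have : ∀ᶠ z in nhds t, z - t ≤ 1 := by
        have : ∀ᶠ z in nhds t, z < t + 1 := Filter.Tendsto.eventually_lt_const
          (by linarith) Filter.tendsto_id
        filter_upwards [this] with z hz; linarith
      exact this.filter_mono (nhdsWithin_le_nhds)
    filter_upwards [hev, hev2, self_mem_nhdsWithin] with z hz hz1 (hzt : t < z)
    set h := z - t with hh
    have h0 : 0 < h := by simp [hh]; linarith
    -- candidate point in Ω
    have hqΩ : (1 - h) • p + h • c ∈ Ω := hcv hpΩ hcΩ (by linarith) h0.le (by ring)
    have key : f z ≤ (r / 2) * h + f t := by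
      have h1 : f z ≤ dist (x z) ((1 - h) • p + h • c) := infDist_le_dist_of_mem hqΩ
      have h2 : x z - ((1 - h) • p + h • c)
          = (x z - x t - h • (c - x t)) + (1 - h) • (x t - p) := by
        module
      have h3 : dist (x z) ((1 - h) • p + h • c) ≤ ‖x z - x t - h • (c - x t)‖
          + (1 - h) * ‖x t - p‖ := by
        rw [dist_eq_norm, h2]
        refine (norm_add_le _ _).trans ?_
        rw [norm_smul, Real.norm_eq_abs, abs_of_nonneg (by linarith)]
      have h4 : ‖x z - x t - h • (c - x t)‖ ≤ (r / 2) * h := by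
        have := hz
        rwa [Real.norm_eq_abs, abs_of_pos h0] at this
      have h5 : (1 - h) * ‖x t - p‖ ≤ f t :=
        le_trans (mul_le_of_le_one_left (norm_nonneg _) (by linarith)) hpf
      calc f z ≤ _ := h1
        _ ≤ _ := h3
        _ ≤ (r / 2) * h + f t := add_le_add h4 h5
    have : (z - t)⁻¹ * (f z - f t) ≤ r / 2 := by
      rw [← hh]
      rw [inv_mul_le_iff₀ h0]
      linarith [key]
    linarith
  have hbound : ∀ t ∈ Ico 0 T, (fun _ : ℝ => (0:ℝ)) t ≤ 0 * f t + 0 := by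
    intro t _; simp
  have hfa : f 0 ≤ 0 := le_of_eq (infDist_zero_of_mem hinit)
  have := le_gronwallBound_of_liminf_deriv_right_le hfc hf' hfa hbound T
    ⟨hT, le_refl T⟩
  rw [gronwallBound_ε0_δ0] at this
  have h0le : 0 ≤ f T := infDist_nonneg
  have : f T = 0 := le_antisymm this h0le
  exact (hcl.mem_iff_infDist_zero hne).2 this
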